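/- Let c, c₀ ∈ ℝ and let K : ℝ → ℝ be twice continuously differentiable with K(0) = 0. Define W₁(x) = ½(−K'(x) + c₀e^{−K(x)} + c·e^{−K(x)}∫₀ˣ e^{K(t)} dt) and W₂(x) = ½(K'(x) + c₀e^{−K(x)} + c·e^{−K(x)}∫₀ˣ e^{K(t)} dt). Then W₂ − W₁ = K' and W₁, W₂ satisfy W₂² − W₁² + W₂' + W₁' = c identically on ℝ. -/

import Mathlib

open intervalIntegral

/-- Given constants `c, c₀` and a C² function `K` with `K(0) = 0`, the
functions `W₁ = ½(−K' + c₀e^{−K} + c·e^{−K}∫₀ˣ e^{K})` and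
`W₂ = ½(K' + c₀e^{−K} + c·e^{−K}∫₀ˣ e^{K})` satisfy `W₂ − W₁ = K'` and
`W₂² − W₁² + W₂' + W₁' = c` identically on `ℝ`. -/
theorem stmt19 (c c₀ : ℝ) (K : ℝ → ℝ) (hK : ContDiff ℝ 2 K) (hK0 : K 0 = 0)
    (W₁ W₂ : ℝ → ℝ)
    (hW₁ : W₁ = fun x => (1 / 2) * (-deriv K x + c₀ * Real.exp (-K x)
      + c * Real.exp (-K x) * ∫ t in (0 : ℝ)..x, Real.exp (K t)))
    (hW₂ : W₂ = fun x => (1 / 2) * (deriv K x + c₀ * Real.exp (-K x)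
      + c * Real.exp (-K x) * ∫ t in (0 : ℝ)..x, Real.exp (K t))) :
    (∀ x, W₂ x - W₁ x = deriv K x) ∧
    (∀ x, W₂ x ^ 2 - W₁ x ^ 2 + deriv W₂ x + deriv W₁ x = c) := by
  have hKd : Differentiable ℝ K := hK.differentiable (by norm_num)
  have hK' : ContDiff ℝ 1 (deriv K) := by
    have := (contDiff_succ_iff_deriv (n := 1)).mp hK
    exact this.2.2
  have hK'd : Differentiable ℝ (deriv K) := hK'.differentiable one_ne_zero
  have hcont : Continuous fun t => Real.exp (K t) := Real.continuous_exp.comp hK.continuous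
  have hI : ∀ x : ℝ, HasDerivAt (fun x => ∫ t in (0:ℝ)..x, Real.exp (K t))
      (Real.exp (K x)) x := by
    intro x
    exact intervalIntegral.integral_hasDerivAt_right (hcont.intervalIntegrable _ _)
      (hcont.stronglyMeasurableAtFilter _ _) hcont.continuousAt
  have hE : ∀ x : ℝ, HasDerivAt (fun x => Real.exp (-K x))
      (Real.exp (-K x) * (-deriv K x)) x := by
    intro x
    have h1 : HasDerivAt (fun x => -K x) (-deriv K x) x := (hKd x).hasDerivAt.neg
    exact (Real.hasDerivAt_exp (-K x)).comp x h1
  have hEI : ∀ x : ℝ, Real.exp (-K x) * Real.exp (K x) = 1 := by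
    intro x
    rw [← Real.exp_add]
    simp
  have hF : ∀ x : ℝ, HasDerivAt (fun x => c₀ * Real.exp (-K x)
      + c * Real.exp (-K x) * ∫ t in (0:ℝ)..x, Real.exp (K t))
      (c₀ * (Real.exp (-K x) * (-deriv K x))
        + (c * (Real.exp (-K x) * (-deriv K x)) * (∫ t in (0:ℝ)..x, Real.exp (K t))
          + c * Real.exp (-K x) * Real.exp (K x))) x := by
    intro x
    exact (((hE x).const_mul c₀).add
      ((((hE x).const_mul c).mul (hI x))))
  have hD2 : ∀ x : ℝ, HasDerivAt (deriv K) (deriv (deriv K) x) x :=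
    fun x => (hK'd x).hasDerivAt
  have hW₁d : ∀ x : ℝ, deriv W₁ x = (1/2) * (-(deriv (deriv K) x)
      + (c₀ * (Real.exp (-K x) * (-deriv K x))
        + (c * (Real.exp (-K x) * (-deriv K x)) * (∫ t in (0:ℝ)..x, Real.exp (K t))
          + c * Real.exp (-K x) * Real.exp (K x)))) := by
    intro x
    rw [hW₁]
    have h := ((((hD2 x).neg.add (hF x)).const_mul (1/2)).deriv)
    rw [← h]
    congr 1
    ext y
    simp only [Pi.add_apply, Pi.neg_apply]
    ring
  have hW₂d : ∀ x : ℝ, deriv W₂ x = (1/2) * (deriv (deriv K) x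
      + (c₀ * (Real.exp (-K x) * (-deriv K x))
        + (c * (Real.exp (-K x) * (-deriv K x)) * (∫ t in (0:ℝ)..x, Real.exp (K t))
          + c * Real.exp (-K x) * Real.exp (K x)))) := by
    intro x
    rw [hW₂]
    have h := ((((hD2 x).add (hF x)).const_mul (1/2)).deriv)
    rw [← h]
    congr 1
    ext y
    simp only [Pi.add_apply, Pi.neg_apply]
    ring
  constructor
  · intro x
    rw [hW₁, hW₂]
    ring
  · intro x
    rw [hW₂d x, hW₁d x, hW₁, hW₂]
    simp only
    linear_combination c * hEI x
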